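/- For positive integers n and m, the value #{A ∈ M(n,m) : A = A^T}, i.e., the number of n×n symmetric non-negative integer matrices with all row sums equal to m, equals the number of distinct irreducible constituents (counted with multiplicity) in the S_{nm}-character Ind_{S_m^n}^{S_{nm}} 1 — equivalently, Σ_{ν ⊢ nm} K_{ν, m^n} where K are Kostka numbers. -/

import Mathlib

open Matrix Finset

/-! ### Local growth rules -/

/-- `hsle μ ρ` : `μ ⊆ ρ` and `ρ/μ` is a horizontal strip. -/
def hsle (μ ρ : ℕ → ℕ) : Prop := (∀ k, μ k ≤ ρ k) ∧ (∀ k, ρ (k+1) ≤ μ k)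

/-- forward local rule of the growth diagram -/
def fwd (l μ ν : ℕ → ℕ) (a : ℕ) : ℕ → ℕ
  | 0 => max (μ 0) (ν 0) + a
  | k+1 => max (μ (k+1)) (ν (k+1)) + (min (μ k) (ν k) - l k)

/-- backward local rule : the inner shape -/
def bwdL (ρ μ ν : ℕ → ℕ) : ℕ → ℕ :=
  fun k => min (μ k) (ν k) - (ρ (k+1) - max (μ (k+1)) (ν (k+1)))

/-- backward local rule : the matrix entry -/
def bwdA (ρ μ ν : ℕ → ℕ) : ℕ := ρ 0 - max (μ 0) (ν 0)

theorem fwd_comm (l μ ν : ℕ → ℕ) (a : ℕ) : fwd l μ ν a = fwd l ν μ a := by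
  funext k; cases k <;> simp [fwd] <;> omega

theorem bwdL_comm (ρ μ ν : ℕ → ℕ) : bwdL ρ μ ν = bwdL ρ ν μ := by
  funext k; simp [bwdL]; omega

theorem bwdA_comm (ρ μ ν : ℕ → ℕ) : bwdA ρ μ ν = bwdA ρ ν μ := by
  simp [bwdA]; omega

theorem fwd_hsle_left {l μ ν : ℕ → ℕ} (h1 : hsle l μ) (h2 : hsle l ν) (a : ℕ) :
    hsle μ (fwd l μ ν a) := by
  obtain ⟨h1a, h1b⟩ := h1; obtain ⟨h2a, h2b⟩ := h2
  constructor
  · intro k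
    cases k with
    | zero => simp [fwd]; omega
    | succ k => have := h1a k; have := h2a k; simp [fwd]; omega
  · intro k
    have := h1b k; have := h2b k
    have := h1a k; have := h2a k
    show max (μ (k+1)) (ν (k+1)) + (min (μ k) (ν k) - l k) ≤ μ k
    omega

theorem fwd_hsle_right {l μ ν : ℕ → ℕ} (h1 : hsle l μ) (h2 : hsle l ν) (a : ℕ) :
    hsle ν (fwd l μ ν a) := fwd_comm l μ ν a ▸ fwd_hsle_left h2 h1 a

theorem bwd_hsle_left {ρ μ ν : ℕ → ℕ} (h1 : hsle μ ρ) (h2 : hsle ν ρ) :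
    hsle (bwdL ρ μ ν) μ := by
  obtain ⟨h1a, h1b⟩ := h1; obtain ⟨h2a, h2b⟩ := h2
  constructor
  · intro k; simp only [bwdL]; omega
  · intro k
    have := h1a (k+1); have := h2a (k+1); have := h1b k; have := h2b k
    simp only [bwdL]; omega

theorem bwd_hsle_right {ρ μ ν : ℕ → ℕ} (h1 : hsle μ ρ) (h2 : hsle ν ρ) :
    hsle (bwdL ρ μ ν) ν := bwdL_comm ρ μ ν ▸ bwd_hsle_left h2 h1

theorem bwd_fwd {ρ μ ν : ℕ → ℕ} (h1 : hsle μ ρ) (h2 : hsle ν ρ) :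
    fwd (bwdL ρ μ ν) μ ν (bwdA ρ μ ν) = ρ := by
  obtain ⟨h1a, h1b⟩ := h1; obtain ⟨h2a, h2b⟩ := h2
  funext k
  cases k with
  | zero => have := h1a 0; have := h2a 0; simp [fwd, bwdA]; omega
  | succ k =>
    have := h1a (k+1); have := h2a (k+1); have := h1b k; have := h2b k
    simp [fwd, bwdL]; omega

theorem fwd_bwd_L {l μ ν : ℕ → ℕ} (h1 : hsle l μ) (h2 : hsle l ν) (a : ℕ) :
    bwdL (fwd l μ ν a) μ ν = l := by
  obtain ⟨h1a, h1b⟩ := h1; obtain ⟨h2a, h2b⟩ := h2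
  funext k
  have := h1a k; have := h2a k; have := h1b k; have := h2b k
  simp only [bwdL, fwd]; omega

theorem fwd_bwd_A {l μ ν : ℕ → ℕ} (h1 : hsle l μ) (h2 : hsle l ν) (a : ℕ) :
    bwdA (fwd l μ ν a) μ ν = a := by
  simp only [bwdA, fwd]; omega

/-- a partial self-`hsle` ("antitone step") follows from being above something -/
theorem hsle_self_of {μ ρ : ℕ → ℕ} (h : hsle μ ρ) : hsle ρ ρ := by
  obtain ⟨ha, hb⟩ := h
  exact ⟨fun k => le_rfl, fun k => le_trans (hb k) (ha k)⟩

theorem hsle_zero_zero : hsle (fun _ => 0) (fun _ => 0) := ⟨fun _ => le_rfl, fun _ => le_rfl⟩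

/-- size of a partition, as sum over `range (n+1)` -/
def siz (n : ℕ) (f : ℕ → ℕ) : ℕ := ∑ k ∈ range (n+1), f k

theorem fwd_siz {n : ℕ} {l μ ν : ℕ → ℕ} (h1 : hsle l μ) (h2 : hsle l ν) (a : ℕ)
    (hμ : μ n = 0) (hν : ν n = 0) :
    siz n (fwd l μ ν a) + siz n l = a + siz n μ + siz n ν := by
  obtain ⟨h1a, h1b⟩ := h1; obtain ⟨h2a, h2b⟩ := h2
  have key : ∀ k, fwd l μ ν a (k+1) + l k = max (μ (k+1)) (ν (k+1)) + min (μ k) (ν k) := by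
    intro k
    have := h1a k; have := h2a k; have := h1b k; have := h2b k
    simp [fwd]; omega
  have hsum : ∑ k ∈ range n, (fwd l μ ν a (k+1) + l k)
      = ∑ k ∈ range n, (max (μ (k+1)) (ν (k+1)) + min (μ k) (ν k)) :=
    Finset.sum_congr rfl (fun k _ => key k)
  have e1 : siz n (fwd l μ ν a) = ∑ k ∈ range n, fwd l μ ν a (k+1) + fwd l μ ν a 0 :=
    Finset.sum_range_succ' _ n
  have e2 : siz n μ = ∑ k ∈ range n, μ (k+1) + μ 0 := Finset.sum_range_succ' _ n
  have e3 : siz n ν = ∑ k ∈ range n, ν (k+1) + ν 0 := Finset.sum_range_succ' _ n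
  have e4 : siz n l = ∑ k ∈ range n, l k + l n := Finset.sum_range_succ _ n
  have e5 : ∑ k ∈ range n, (max (μ (k+1)) (ν (k+1)) + min (μ k) (ν k))
      = ∑ k ∈ range n, max (μ (k+1)) (ν (k+1)) + ∑ k ∈ range n, min (μ k) (ν k) :=
    Finset.sum_add_distrib
  have e6 : ∑ k ∈ range n, (fwd l μ ν a (k+1) + l k)
      = ∑ k ∈ range n, fwd l μ ν a (k+1) + ∑ k ∈ range n, l k := Finset.sum_add_distrib
  have e7 : ∑ k ∈ range (n+1), min (μ k) (ν k) = ∑ k ∈ range n, min (μ k) (ν k) + min (μ n) (ν n) :=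
    Finset.sum_range_succ _ n
  have e8 : ∑ k ∈ range (n+1), max (μ k) (ν k)
      = ∑ k ∈ range n, max (μ (k+1)) (ν (k+1)) + max (μ 0) (ν 0) := Finset.sum_range_succ' _ n
  have e9 : ∑ k ∈ range (n+1), (max (μ k) (ν k) + min (μ k) (ν k)) = siz n μ + siz n ν := by
    rw [show siz n μ + siz n ν = ∑ k ∈ range (n+1), (μ k + ν k) from Finset.sum_add_distrib.symm]
    exact Finset.sum_congr rfl (fun k _ => by omega)
  have e10 : ∑ k ∈ range (n+1), (max (μ k) (ν k) + min (μ k) (ν k))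
      = ∑ k ∈ range (n+1), max (μ k) (ν k) + ∑ k ∈ range (n+1), min (μ k) (ν k) :=
    Finset.sum_add_distrib
  have hl : l n = 0 := by have := h1a n; omega
  have h0 : fwd l μ ν a 0 = max (μ 0) (ν 0) + a := rfl
  omega
/-! ### The forward growth diagram -/

/-- the growth diagram of a matrix `A` -/
def grid (A : ℕ → ℕ → ℕ) : ℕ → ℕ → ℕ → ℕ
  | 0, _ => fun _ => 0
  | _+1, 0 => fun _ => 0
  | i+1, j+1 => fwd (grid A i j) (grid A i (j+1)) (grid A (i+1) j) (A i j)

theorem grid_zero_left (A : ℕ → ℕ → ℕ) (j : ℕ) : grid A 0 j = fun _ => 0 := by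
  simp [grid]

theorem grid_zero_right (A : ℕ → ℕ → ℕ) (i : ℕ) : grid A i 0 = fun _ => 0 := by
  cases i <;> simp [grid]

theorem grid_succ (A : ℕ → ℕ → ℕ) (i j : ℕ) :
    grid A (i+1) (j+1) = fwd (grid A i j) (grid A i (j+1)) (grid A (i+1) j) (A i j) := by
  simp [grid]

/-- the main invariant of the growth diagram: horizontal strips in both directions -/
theorem grid_inv (A : ℕ → ℕ → ℕ) :
    ∀ i j, hsle (grid A i j) (grid A i (j+1)) ∧ hsle (grid A i j) (grid A (i+1) j) := by
  have main : ∀ s i j, i + j ≤ s →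
      hsle (grid A i j) (grid A i (j+1)) ∧ hsle (grid A i j) (grid A (i+1) j) := by
    intro s
    induction s with
    | zero =>
      intro i j h
      obtain ⟨rfl, rfl⟩ : i = 0 ∧ j = 0 := by omega
      rw [grid_zero_left, grid_zero_right, grid_zero_left]
      exact ⟨hsle_zero_zero, hsle_zero_zero⟩
    | succ s ih =>
      intro i j h
      constructor
      · cases i with
        | zero => rw [grid_zero_left, grid_zero_left]; exact hsle_zero_zero
        | succ i =>
          obtain ⟨H, V⟩ := ih i j (by omega)
          rw [grid_succ]
          exact fwd_hsle_right H V _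
      · cases j with
        | zero => rw [grid_zero_right, grid_zero_right]; exact hsle_zero_zero
        | succ j =>
          obtain ⟨H, V⟩ := ih i j (by omega)
          rw [grid_succ]
          exact fwd_hsle_left H V _
  exact fun i j => main (i+j) i j le_rfl

/-- the `(i,j)` entry of the grid has at most `j` rows -/
theorem grid_rows (A : ℕ → ℕ → ℕ) : ∀ j i k, j ≤ k → grid A i j k = 0 := by
  intro j
  induction j with
  | zero => intro i k _; rw [grid_zero_right]
  | succ j ih =>
    intro i k hk
    cases i with
    | zero => rw [grid_zero_left]
    | succ i =>
      have H := (grid_inv A (i+1) j).1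
      cases k with
      | zero => omega
      | succ k =>
        have := H.2 k
        have := ih (i+1) k (by omega)
        omega

theorem grid_congr {A B : ℕ → ℕ → ℕ} :
    ∀ i j, (∀ p q, p < i → q < j → A p q = B p q) → grid A i j = grid B i j := by
  have main : ∀ s i j, i + j ≤ s → (∀ p q, p < i → q < j → A p q = B p q) →
      grid A i j = grid B i j := by
    intro s
    induction s with
    | zero =>
      intro i j h _
      obtain ⟨rfl, rfl⟩ : i = 0 ∧ j = 0 := by omega
      rw [grid_zero_left, grid_zero_left]
    | succ s ih =>
      intro i j h hag
      match i, j, h, hag with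
      | 0, j, h, hag => rw [grid_zero_left, grid_zero_left]
      | i+1, 0, h, hag => rw [grid_zero_right, grid_zero_right]
      | i+1, j+1, h, hag =>
        rw [grid_succ, grid_succ,
          ih i j (by omega) (fun p q hp hq => hag p q (by omega) (by omega)),
          ih i (j+1) (by omega) (fun p q hp hq => hag p q (by omega) (by omega)),
          ih (i+1) j (by omega) (fun p q hp hq => hag p q (by omega) (by omega)),
          hag i j (by omega) (by omega)]
  exact fun i j => main (i+j) i j le_rfl

theorem grid_symm {A : ℕ → ℕ → ℕ} (hA : ∀ p q, A p q = A q p) :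
    ∀ i j, grid A i j = grid A j i := by
  have main : ∀ s i j, i + j ≤ s → grid A i j = grid A j i := by
    intro s
    induction s with
    | zero =>
      intro i j h
      obtain ⟨rfl, rfl⟩ : i = 0 ∧ j = 0 := by omega
      rfl
    | succ s ih =>
      intro i j h
      match i, j, h with
      | 0, j, h => rw [grid_zero_left, grid_zero_right]
      | i+1, 0, h => rw [grid_zero_left, grid_zero_right]
      | i+1, j+1, h =>
        rw [grid_succ, grid_succ, ih i j (by omega), ih i (j+1) (by omega),
          ih (i+1) j (by omega), hA i j, fwd_comm]
  exact fun i j => main (i+j) i j le_rfl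

/-- rectangle sums: the size of the `(i,j)` grid entry is the sum of the matrix over the
corresponding rectangle. -/
theorem grid_siz (A : ℕ → ℕ → ℕ) (n : ℕ) :
    ∀ i j, j ≤ n → siz n (grid A i j) = ∑ p ∈ Finset.range i, ∑ q ∈ Finset.range j, A p q := by
  have main : ∀ s i j, i + j ≤ s → j ≤ n →
      siz n (grid A i j) = ∑ p ∈ Finset.range i, ∑ q ∈ Finset.range j, A p q := by
    intro s
    induction s with
    | zero =>
      intro i j h hj
      obtain ⟨rfl, rfl⟩ : i = 0 ∧ j = 0 := by omega
      simp [grid_zero_left, siz]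
    | succ s ih =>
      intro i j h hj
      match i, j, h, hj with
      | 0, j, h, hj => simp [grid_zero_left, siz]
      | i+1, 0, h, hj => simp [grid_zero_right, siz]
      | i+1, j+1, h, hj =>
        have H := (grid_inv A i j).1
        have V := (grid_inv A i j).2
        have hμ : grid A i (j+1) n = 0 := grid_rows A (j+1) i n (by omega)
        have hν : grid A (i+1) j n = 0 := grid_rows A j (i+1) n (by omega)
        have hs := fwd_siz H V (A i j) hμ hν
        rw [← grid_succ] at hs
        have e1 := ih i j (by omega) (by omega)
        have e2 := ih i (j+1) (by omega) (by omega)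
        have e3 := ih (i+1) j (by omega) (by omega)
        have e4 : ∀ p, ∑ q ∈ Finset.range (j+1), A p q = ∑ q ∈ Finset.range j, A p q + A p j :=
          fun p => Finset.sum_range_succ _ _
        have e5 : ∑ p ∈ Finset.range (i+1), ∑ q ∈ Finset.range (j+1), A p q
            = ∑ p ∈ Finset.range i, ∑ q ∈ Finset.range (j+1), A p q
              + ∑ q ∈ Finset.range (j+1), A i q := Finset.sum_range_succ _ _
        have e6 : ∑ p ∈ Finset.range (i+1), ∑ q ∈ Finset.range j, A p q
            = ∑ p ∈ Finset.range i, ∑ q ∈ Finset.range j, A p q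
              + ∑ q ∈ Finset.range j, A i q := Finset.sum_range_succ _ _
        have e7 := e4 i
        omega
  exact fun i j hj => main (i+j) i j le_rfl hj
/-! ### The backward growth diagram -/

/-- the backward growth diagram reconstructed from a chain `c` (the top boundary,
used for both boundaries, giving a symmetric grid) -/
def bgrid (n : ℕ) (c : ℕ → ℕ → ℕ) (i j : ℕ) : ℕ → ℕ :=
  if h : n ≤ i then c j
  else if h2 : n ≤ j then c i
  else bwdL (bgrid n c (i+1) (j+1)) (bgrid n c i (j+1)) (bgrid n c (i+1) j)
termination_by (n - i) + (n - j)
decreasing_by all_goals omega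

theorem bgrid_top {n : ℕ} {c : ℕ → ℕ → ℕ} {i j : ℕ} (h : n ≤ i) : bgrid n c i j = c j := by
  rw [bgrid]; simp [h]

theorem bgrid_right {n : ℕ} {c : ℕ → ℕ → ℕ} {i j : ℕ} (h : i < n) (h2 : n ≤ j) :
    bgrid n c i j = c i := by
  rw [bgrid]; simp [h, h2, Nat.not_le.2 h]

theorem bgrid_interior {n : ℕ} {c : ℕ → ℕ → ℕ} {i j : ℕ} (h : i < n) (h2 : j < n) :
    bgrid n c i j
      = bwdL (bgrid n c (i+1) (j+1)) (bgrid n c i (j+1)) (bgrid n c (i+1) j) := by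
  rw [bgrid]; simp [Nat.not_le.2 h, Nat.not_le.2 h2]

section Bgrid

variable {n : ℕ} {c : ℕ → ℕ → ℕ}
  (hc0 : c 0 = fun _ => 0)
  (hcs : ∀ j, hsle (c j) (c (j+1)))
  (hcn : ∀ j, n ≤ j → c j = c n)

include hc0 hcs hcn

theorem chain_self_hsle : ∀ j, hsle (c j) (c j) := by
  intro j
  cases j with
  | zero => rw [hc0]; exact hsle_zero_zero
  | succ j => exact hsle_self_of (hcs j)

theorem bgrid_inv : ∀ i j, hsle (bgrid n c i j) (bgrid n c i (j+1))
    ∧ hsle (bgrid n c i j) (bgrid n c (i+1) j) := by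
  have main : ∀ s i j, (n - i) + (n - j) ≤ s →
      hsle (bgrid n c i j) (bgrid n c i (j+1)) ∧ hsle (bgrid n c i j) (bgrid n c (i+1) j) := by
    intro s
    induction s with
    | zero =>
      intro i j h
      have hi : n ≤ i := by omega
      have hj : n ≤ j := by omega
      rw [bgrid_top hi, bgrid_top hi, bgrid_top (by omega : n ≤ i+1)]
      exact ⟨hcs j, chain_self_hsle hc0 hcs hcn j⟩
    | succ s ih =>
      intro i j h
      by_cases hi : n ≤ i
      · rw [bgrid_top hi, bgrid_top hi, bgrid_top (by omega : n ≤ i+1)]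
        exact ⟨hcs j, chain_self_hsle hc0 hcs hcn j⟩
      · by_cases hj : n ≤ j
        · -- right boundary, i < n ≤ j
          rw [bgrid_right (by omega) hj, bgrid_right (by omega) (by omega)]
          constructor
          · exact chain_self_hsle hc0 hcs hcn i
          · by_cases hi1 : n ≤ i + 1
            · rw [bgrid_top hi1, hcn j hj]
              have : i + 1 = n := by omega
              rw [← this]
              exact hcs i
            · rw [bgrid_right (by omega) hj]
              exact hcs i
        · -- interior
          rw [bgrid_interior (by omega) (by omega)]
          have h1 := (ih i (j+1) (by omega)).2
          have h2 := (ih (i+1) j (by omega)).1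
          exact ⟨bwd_hsle_left h1 h2, bwd_hsle_right h1 h2⟩
  exact fun i j => main ((n-i)+(n-j)) i j le_rfl

theorem bgrid_symm : ∀ i j, bgrid n c i j = bgrid n c j i := by
  have main : ∀ s i j, (n - i) + (n - j) ≤ s → bgrid n c i j = bgrid n c j i := by
    intro s
    induction s with
    | zero =>
      intro i j h
      rw [bgrid_top (by omega : n ≤ i), bgrid_top (by omega : n ≤ j), hcn i (by omega),
        hcn j (by omega)]
    | succ s ih =>
      intro i j h
      by_cases hi : n ≤ i
      · by_cases hj : n ≤ j
        · rw [bgrid_top hi, bgrid_top hj, hcn i hi, hcn j hj]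
        · rw [bgrid_top hi, bgrid_right (by omega) hi]
      · by_cases hj : n ≤ j
        · rw [bgrid_top hj, bgrid_right (by omega) hj]
        · rw [bgrid_interior (i := i) (j := j) (by omega) (by omega),
            bgrid_interior (i := j) (j := i) (by omega) (by omega),
            ih (i+1) (j+1) (by omega), ih i (j+1) (by omega), ih (i+1) j (by omega),
            bwdL_comm]
  exact fun i j => main ((n-i)+(n-j)) i j le_rfl

theorem bgrid_zero : ∀ i, bgrid n c i 0 = fun _ => 0 := by
  have main : ∀ s i, n - i ≤ s → bgrid n c i 0 = fun _ => 0 := by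
    intro s
    induction s with
    | zero =>
      intro i h
      rw [bgrid_top (by omega : n ≤ i), hc0]
    | succ s ih =>
      intro i h
      by_cases hi : n ≤ i
      · rw [bgrid_top hi, hc0]
      · rw [bgrid_interior (i := i) (j := 0) (by omega) (by omega), ih (i+1) (by omega)]
        funext k
        simp [bwdL]
  exact fun i => main (n-i) i le_rfl

end Bgrid
/-! ### Round trips between the two grids -/

/-- the matrix reconstructed from a chain -/
def Bmat (n : ℕ) (c : ℕ → ℕ → ℕ) (i j : ℕ) : ℕ :=
  bwdA (bgrid n c (i+1) (j+1)) (bgrid n c i (j+1)) (bgrid n c (i+1) j)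

theorem grid_self_hsle (A : ℕ → ℕ → ℕ) (i j : ℕ) : hsle (grid A i j) (grid A i j) := by
  cases j with
  | zero => rw [grid_zero_right]; exact hsle_zero_zero
  | succ j => exact hsle_self_of (grid_inv A i j).1

section RT

variable {n : ℕ} {c : ℕ → ℕ → ℕ}
  (hc0 : c 0 = fun _ => 0)
  (hcs : ∀ j, hsle (c j) (c (j+1)))
  (hcn : ∀ j, n ≤ j → c j = c n)

include hc0 hcs hcn

theorem bgrid_zero_left : ∀ j, bgrid n c 0 j = fun _ => 0 := by
  intro j
  by_cases hn : n ≤ 0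
  · have h0 : n = 0 := by omega
    rw [bgrid_top hn, hcn j (by omega), h0, hc0]
  · rw [bgrid_symm hc0 hcs hcn 0 j, bgrid_zero hc0 hcs hcn j]

/-- running the forward rule on the reconstructed matrix recovers the backward grid -/
theorem grid_bgrid : ∀ i j, i ≤ n → j ≤ n → grid (Bmat n c) i j = bgrid n c i j := by
  have main : ∀ s i j, i + j ≤ s → i ≤ n → j ≤ n → grid (Bmat n c) i j = bgrid n c i j := by
    intro s
    induction s with
    | zero =>
      intro i j h _ _
      obtain ⟨rfl, rfl⟩ : i = 0 ∧ j = 0 := by omega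
      rw [grid_zero_left, bgrid_zero_left hc0 hcs hcn]
    | succ s ih =>
      intro i j h hi hj
      cases i with
      | zero => rw [grid_zero_left, bgrid_zero_left hc0 hcs hcn]
      | succ i =>
        cases j with
        | zero => rw [grid_zero_right, bgrid_zero hc0 hcs hcn]
        | succ j =>
          rw [grid_succ, ih i j (by omega) (by omega) (by omega),
            ih i (j+1) (by omega) (by omega) (by omega),
            ih (i+1) j (by omega) (by omega) (by omega),
            bgrid_interior (i := i) (j := j) (by omega) (by omega), Bmat]
          exact bwd_fwd (bgrid_inv hc0 hcs hcn i (j+1)).2 (bgrid_inv hc0 hcs hcn (i+1) j).1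
  exact fun i j hi hj => main (i+j) i j le_rfl hi hj

end RT

section RT2

variable {n : ℕ} {A : ℕ → ℕ → ℕ} (hA : ∀ p q, A p q = A q p)

/-- the chain of a matrix -/
def chainOf (n : ℕ) (A : ℕ → ℕ → ℕ) : ℕ → ℕ → ℕ := fun j => grid A n (min j n)

theorem chainOf_c0 : chainOf n A 0 = fun _ => 0 := by
  have : min 0 n = 0 := by omega
  simp only [chainOf, this]
  rw [grid_zero_right]

theorem chainOf_cs : ∀ j, hsle (chainOf n A j) (chainOf n A (j+1)) := by
  intro j
  by_cases hj : j < n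
  · have : min j n = j := by omega
    have h2 : min (j+1) n = j+1 := by omega
    simp only [chainOf, this, h2]
    exact (grid_inv A n j).1
  · have : min j n = n := by omega
    have h2 : min (j+1) n = n := by omega
    simp only [chainOf, this, h2]
    exact grid_self_hsle A n n
  
theorem chainOf_cn : ∀ j, n ≤ j → chainOf n A j = chainOf n A n := by
  intro j hj
  have h1 : min j n = n := by omega
  have h2 : min n n = n := by omega
  simp only [chainOf, h1, h2]

include hA

/-- the backward grid of the chain of a symmetric matrix recovers the forward grid -/
theorem bgrid_grid : ∀ i j, i ≤ n → j ≤ n → bgrid n (chainOf n A) i j = grid A i j := by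
  have main : ∀ s i j, (n-i) + (n-j) ≤ s → i ≤ n → j ≤ n →
      bgrid n (chainOf n A) i j = grid A i j := by
    intro s
    induction s with
    | zero =>
      intro i j h hi hj
      rw [bgrid_top (by omega : n ≤ i)]
      have h1 : min j n = j := by omega
      simp only [chainOf, h1]
      rw [show i = n by omega]
    | succ s ih =>
      intro i j h hi hj
      by_cases hii : n ≤ i
      · rw [bgrid_top hii]
        have h1 : min j n = j := by omega
        simp only [chainOf, h1]
        rw [show i = n by omega]
      · by_cases hjj : n ≤ j
        · rw [bgrid_right (by omega) hjj]
          have h1 : min i n = i := by omega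
          simp only [chainOf, h1]
          rw [show j = n by omega]
          exact grid_symm hA n i
        · rw [bgrid_interior (i := i) (j := j) (by omega) (by omega),
            ih (i+1) (j+1) (by omega) (by omega) (by omega),
            ih i (j+1) (by omega) (by omega) (by omega),
            ih (i+1) j (by omega) (by omega) (by omega),
            grid_succ]
          exact fwd_bwd_L (grid_inv A i j).1 (grid_inv A i j).2 (A i j)
  exact fun i j hi hj => main ((n-i)+(n-j)) i j le_rfl hi hj

/-- reconstructing the matrix from the chain of a symmetric matrix gives it back -/
theorem Bmat_chainOf : ∀ i j, i < n → j < n → Bmat n (chainOf n A) i j = A i j := by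
  intro i j hi hj
  rw [Bmat, bgrid_grid hA (i+1) (j+1) (by omega) (by omega),
    bgrid_grid hA i (j+1) (by omega) (by omega),
    bgrid_grid hA (i+1) j (by omega) (by omega), grid_succ]
  exact fwd_bwd_A (grid_inv A i j).1 (grid_inv A i j).2 (A i j)

end RT2
/-! ### The chain subtype and the first equivalence -/

/-- chains of partitions with horizontal strips and constant size increment `m` -/
def ChainT (n m : ℕ) : Type :=
  {c : ℕ → ℕ → ℕ // c 0 = (fun _ => 0) ∧ (∀ j, hsle (c j) (c (j+1)))
    ∧ (∀ j, n ≤ j → c j = c n) ∧ (∀ j, j < n → siz n (c (j+1)) = siz n (c j) + m)}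

section Equiv1

variable (n m : ℕ)

/-- symmetric matrices with all row and column sums `m` -/
def MT : Type := {A : Matrix (Fin n) (Fin n) ℕ //
    ((∀ i, ∑ j, A i j = m) ∧ (∀ j, ∑ i, A i j = m)) ∧ A = Aᵀ}

/-- extend a `Fin n` matrix by zero -/
def extMat (A : Matrix (Fin n) (Fin n) ℕ) : ℕ → ℕ → ℕ := fun p q =>
  if h : p < n ∧ q < n then A ⟨p, h.1⟩ ⟨q, h.2⟩ else 0

variable {n m}

theorem extMat_symm {A : Matrix (Fin n) (Fin n) ℕ} (h : A = Aᵀ) :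
    ∀ p q, extMat n A p q = extMat n A q p := by
  intro p q
  unfold extMat
  by_cases h1 : p < n ∧ q < n
  · have h2 : q < n ∧ p < n := ⟨h1.2, h1.1⟩
    rw [dif_pos h1, dif_pos h2]
    conv_lhs => rw [h]
    rfl
  · have h2 : ¬(q < n ∧ p < n) := fun hh => h1 ⟨hh.2, hh.1⟩
    rw [dif_neg h1, dif_neg h2]

theorem extMat_colsum {A : Matrix (Fin n) (Fin n) ℕ} (hc : ∀ j, ∑ i, A i j = m)
    {q : ℕ} (hq : q < n) : ∑ p ∈ Finset.range n, extMat n A p q = m := by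
  rw [← hc ⟨q, hq⟩, Finset.sum_range fun p => extMat n A p q]
  apply Finset.sum_congr rfl
  intro p _
  unfold extMat
  rw [dif_pos ⟨p.isLt, hq⟩]

/-- the forward map : a symmetric matrix to its chain -/
def matToChain (X : MT n m) : ChainT n m := by
  refine ⟨chainOf n (extMat n X.1), chainOf_c0, chainOf_cs, chainOf_cn, ?_⟩
  intro j hj
  have h1 := grid_siz (extMat n X.1) n n (j+1) (by omega)
  have h2 := grid_siz (extMat n X.1) n n j (by omega)
  have e1 : chainOf n (extMat n X.1) (j+1) = grid (extMat n X.1) n (j+1) := by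
    simp only [chainOf]; rw [show min (j+1) n = j+1 by omega]
  have e2 : chainOf n (extMat n X.1) j = grid (extMat n X.1) n j := by
    simp only [chainOf]; rw [show min j n = j by omega]
  rw [e1, e2, h1, h2]
  have e3 : ∀ p, ∑ q ∈ Finset.range (j+1), extMat n X.1 p q
      = ∑ q ∈ Finset.range j, extMat n X.1 p q + extMat n X.1 p j :=
    fun p => Finset.sum_range_succ _ _
  rw [Finset.sum_congr rfl (fun p _ => e3 p), Finset.sum_add_distrib,
    extMat_colsum X.2.1.2 hj]

theorem chain_hyps (c : ChainT n m) :
    c.1 0 = (fun _ => 0) ∧ (∀ j, hsle (c.1 j) (c.1 (j+1))) ∧ (∀ j, n ≤ j → c.1 j = c.1 n) :=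
  ⟨c.2.1, c.2.2.1, c.2.2.2.1⟩

theorem Bmat_symm (c : ChainT n m) : ∀ i j, Bmat n c.1 i j = Bmat n c.1 j i := by
  obtain ⟨hc0, hcs, hcn⟩ := chain_hyps c
  intro i j
  unfold Bmat
  rw [bgrid_symm hc0 hcs hcn (i+1) (j+1), bgrid_symm hc0 hcs hcn i (j+1),
    bgrid_symm hc0 hcs hcn (i+1) j, bwdA_comm]

theorem Bmat_colsum (c : ChainT n m) {j : ℕ} (hj : j < n) :
    ∑ p ∈ Finset.range n, Bmat n c.1 p j = m := by
  obtain ⟨hc0, hcs, hcn⟩ := chain_hyps c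
  have h1 := grid_siz (Bmat n c.1) n n (j+1) (by omega)
  have h2 := grid_siz (Bmat n c.1) n n j (by omega)
  have e1 : grid (Bmat n c.1) n (j+1) = c.1 (j+1) := by
    rw [grid_bgrid hc0 hcs hcn n (j+1) le_rfl (by omega), bgrid_top le_rfl]
  have e2 : grid (Bmat n c.1) n j = c.1 j := by
    rw [grid_bgrid hc0 hcs hcn n j le_rfl (by omega), bgrid_top le_rfl]
  have hsz := c.2.2.2.2 j hj
  rw [e1] at h1
  rw [e2] at h2
  have e3 : ∀ p, ∑ q ∈ Finset.range (j+1), Bmat n c.1 p q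
      = ∑ q ∈ Finset.range j, Bmat n c.1 p q + Bmat n c.1 p j :=
    fun p => Finset.sum_range_succ _ _
  have e4 : ∑ p ∈ Finset.range n, ∑ q ∈ Finset.range (j+1), Bmat n c.1 p q
      = ∑ p ∈ Finset.range n, ∑ q ∈ Finset.range j, Bmat n c.1 p q
        + ∑ p ∈ Finset.range n, Bmat n c.1 p j := by
    rw [Finset.sum_congr rfl (fun p _ => e3 p), Finset.sum_add_distrib]
  omega

/-- the backward map : a chain to a symmetric matrix -/
def chainToMat (c : ChainT n m) : MT n m := by
  refine ⟨Matrix.of (fun i j : Fin n => Bmat n c.1 i j), ⟨⟨?_, ?_⟩, ?_⟩⟩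
  · intro i
    show ∑ j : Fin n, Bmat n c.1 i j = m
    rw [Fin.sum_univ_eq_sum_range (fun q => Bmat n c.1 i q)]
    calc ∑ j ∈ Finset.range n, Bmat n c.1 i j
        = ∑ j ∈ Finset.range n, Bmat n c.1 j i :=
          Finset.sum_congr rfl (fun j _ => Bmat_symm c i j)
      _ = m := Bmat_colsum c i.isLt
  · intro j
    show ∑ i : Fin n, Bmat n c.1 i j = m
    rw [Fin.sum_univ_eq_sum_range (fun p => Bmat n c.1 p j)]
    exact Bmat_colsum c j.isLt
  · ext i j
    exact Bmat_symm c i j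

theorem chain_ext {c c' : ChainT n m} (h : ∀ j, j ≤ n → c.1 j = c'.1 j) : c = c' := by
  apply Subtype.ext
  funext j
  by_cases hj : j ≤ n
  · exact h j hj
  · rw [c.2.2.2.1 j (by omega), c'.2.2.2.1 j (by omega), h n le_rfl]

/-- the first equivalence: symmetric matrices with line sums `m` are in bijection with
chains of partitions with `hsle` steps of constant size increment `m` -/
def equiv1 (n m : ℕ) : MT n m ≃ ChainT n m where
  toFun := matToChain
  invFun := chainToMat
  left_inv := by
    intro X
    apply Subtype.ext
    ext i j
    show Bmat n (chainOf n (extMat n X.1)) i j = X.1 i j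
    rw [Bmat_chainOf (extMat_symm X.2.2) i j i.isLt j.isLt]
    unfold extMat
    rw [dif_pos ⟨i.isLt, j.isLt⟩]
  right_inv := by
    intro c
    obtain ⟨hc0, hcs, hcn⟩ := chain_hyps c
    apply chain_ext
    intro j hj
    show chainOf n (extMat n (chainToMat c).1) j = c.1 j
    have key : grid (extMat n (chainToMat c).1) n (min j n) = grid (Bmat n c.1) n (min j n) := by
      apply grid_congr
      intro p q hp hq
      unfold extMat
      rw [dif_pos ⟨hp, by omega⟩]
      rfl
    simp only [chainOf]
    rw [key, grid_bgrid hc0 hcs hcn n (min j n) le_rfl (by omega), bgrid_top le_rfl,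
      show min j n = j by omega]

end Equiv1
/-! ### Counting helpers -/

theorem dc_filter {P : ℕ → Prop} [DecidablePred P] (hP : ∀ k, P (k+1) → P k) (N : ℕ) :
    ∀ k, k < N → (P k ↔ k < ((Finset.range N).filter fun x => P x).card) := by
  intro k hk
  have hdown : ∀ a b, a ≤ b → P b → P a := by
    intro a b hab hb
    induction b with
    | zero => exact (show a = 0 by omega) ▸ hb
    | succ b ih =>
      rcases Nat.lt_or_ge a (b+1) with h | h
      · exact ih (by omega) (hP b hb)
      · have : a = b + 1 := by omega
        rw [this]; exact hb
  constructor
  · intro hPk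
    have hsub : Finset.range (k+1) ⊆ (Finset.range N).filter fun x => P x := by
      intro x hx
      rw [Finset.mem_range] at hx
      rw [Finset.mem_filter, Finset.mem_range]
      exact ⟨by omega, hdown x k (by omega) hPk⟩
    have := Finset.card_le_card hsub
    rw [Finset.card_range] at this
    omega
  · intro hc
    by_contra hPk
    have hsub : ((Finset.range N).filter fun x => P x) ⊆ Finset.range k := by
      intro x hx
      rw [Finset.mem_filter, Finset.mem_range] at hx
      rw [Finset.mem_range]
      by_contra hxk
      exact hPk (hdown k x (by omega) hx.2)
    have := Finset.card_le_card hsub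
    rw [Finset.card_range] at this
    omega

theorem lt_filter_card_le {P : ℕ → Prop} [DecidablePred P] (N : ℕ) :
    ((Finset.range N).filter fun x => P x).card ≤ N := by
  have := Finset.card_le_card (Finset.filter_subset (fun x => P x) (Finset.range N))
  rwa [Finset.card_range] at this

theorem filter_lt_card {M b : ℕ} (h : b ≤ M) :
    ((Finset.range M).filter fun j => j < b).card = b := by
  have : (Finset.range M).filter (fun j => j < b) = Finset.range b := by
    ext x
    simp only [Finset.mem_filter, Finset.mem_range]
    omega
  rw [this, Finset.card_range]

theorem prod_filter_card (n M : ℕ) (Q : ℕ → ℕ → Prop) [∀ i j, Decidable (Q i j)] :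
    ((Finset.range n ×ˢ Finset.range M).filter fun p => Q p.1 p.2).card
      = ∑ i ∈ Finset.range n, ((Finset.range M).filter fun j => Q i j).card := by
  rw [Finset.card_eq_sum_card_fiberwise
    (f := fun (p : ℕ × ℕ) => p.1) (t := Finset.range n) ?_]
  · apply Finset.sum_congr rfl
    intro i _
    rw [← Finset.card_image_of_injOn
      (f := fun (p : ℕ × ℕ) => p.2)
      (s := ((Finset.range n ×ˢ Finset.range M).filter fun p => Q p.1 p.2).filter
        fun p => p.1 = i) ?_]
    · congr 1
      ext j
      simp only [Finset.mem_image, Finset.mem_filter, Finset.mem_product, Finset.mem_range]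
      constructor
      · rintro ⟨⟨a, b⟩, ⟨⟨⟨ha, hb⟩, hq⟩, hfib⟩, rfl⟩
        simp only at hfib
        subst hfib
        exact ⟨hb, hq⟩
      · rintro ⟨hj, hq⟩
        refine ⟨(i, j), ⟨⟨⟨?_, hj⟩, hq⟩, rfl⟩, rfl⟩
        simpa using ‹i ∈ Finset.range n›
    · rintro ⟨a, b⟩ ha ⟨a', b'⟩ hb hab
      simp only [Finset.mem_coe, Finset.mem_filter] at ha hb
      simp only at hab
      ext <;> simp [ha.2, hb.2, hab]
  · intro p hp
    rw [Finset.mem_coe, Finset.mem_filter, Finset.mem_product] at hp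
    exact hp.1.1
/-! ### From chains to tableaux -/

section ChainFacts

variable {n m : ℕ} (c : ChainT n m)

theorem chain_mono : ∀ s t, s ≤ t → ∀ i, c.1 s i ≤ c.1 t i := by
  intro s t
  induction t with
  | zero =>
    intro hst i
    have hs : s = 0 := by omega
    subst hs
    exact le_rfl
  | succ t ih =>
    intro hst i
    rcases Nat.lt_or_ge s (t+1) with h | h
    · exact le_trans (ih (by omega) i) ((c.2.2.1 t).1 i)
    · have hs : s = t + 1 := by omega
      subst hs
      exact le_rfl

theorem chain_rows : ∀ t i, t ≤ i → c.1 t i = 0 := by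
  intro t
  induction t with
  | zero => intro i _; rw [c.2.1]
  | succ t ih =>
    intro i hi
    have h := (c.2.2.1 t).2
    cases i with
    | zero => omega
    | succ i =>
      have := h i
      have := ih i (by omega)
      omega

theorem chain_rows_n : ∀ t i, n ≤ i → c.1 t i = 0 := by
  intro t i hi
  rcases Nat.le_total t n with h | h
  · have := chain_mono c t n h i
    have := chain_rows c n i hi
    omega
  · rw [c.2.2.2.1 t h]
    exact chain_rows c n i hi

theorem chain_anti : ∀ t k, c.1 t (k+1) ≤ c.1 t k := by
  intro t k
  cases t with
  | zero => rw [c.2.1]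
  | succ t => exact (hsle_self_of (c.2.2.1 t)).2 k

theorem chain_siz : ∀ t, t ≤ n → siz n (c.1 t) = t * m := by
  intro t
  induction t with
  | zero =>
    intro _
    simp [c.2.1, siz]
  | succ t ih =>
    intro ht
    have := c.2.2.2.2 t (by omega)
    have := ih (by omega)
    have : (t+1) * m = t * m + m := by ring
    omega

theorem chain_entry_le : ∀ t i, c.1 t i ≤ n * m := by
  intro t i
  rcases Nat.lt_or_ge i (n+1) with hi | hi
  · calc c.1 t i ≤ c.1 n i := by
          rcases Nat.le_total t n with h | h
          · exact chain_mono c t n h i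
          · rw [c.2.2.2.1 t h]
      _ ≤ siz n (c.1 n) := Finset.single_le_sum (f := fun k => c.1 n k)
          (fun k _ => Nat.zero_le _) (Finset.mem_range.2 (by omega))
      _ = n * m := chain_siz c n le_rfl
  · rw [chain_rows_n c t i (by omega)]
    omega

/-- the Young diagram of the final shape of a chain -/
def diagOfC : YoungDiagram where
  cells := (Finset.range n ×ˢ Finset.range (n * m + 1)).filter fun p => p.2 < c.1 n p.1
  isLowerSet := by
    rintro ⟨i, j⟩ ⟨i', j'⟩ hle hmem
    obtain ⟨hi, hj⟩ : i' ≤ i ∧ j' ≤ j := Prod.mk_le_mk.mp hle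
    simp only [Finset.coe_filter, Set.mem_setOf_eq, Finset.mem_coe, Finset.mem_product,
      Finset.mem_range] at hmem ⊢
    obtain ⟨⟨h1, h2⟩, h3⟩ := hmem
    have hanti : c.1 n i ≤ c.1 n i' := by
      have key : ∀ d, c.1 n (i' + d) ≤ c.1 n i' := by
        intro d
        induction d with
        | zero => exact le_rfl
        | succ d ih => exact le_trans (chain_anti c n _) ih
      have := key (i - i')
      rwa [show i' + (i - i') = i by omega] at this
    exact ⟨⟨by omega, by omega⟩, by omega⟩

theorem mem_diagOfC {i j : ℕ} : (i, j) ∈ diagOfC c ↔ j < c.1 n i := by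
  show (i, j) ∈ (diagOfC c).cells ↔ _
  unfold diagOfC
  simp only [Finset.mem_filter, Finset.mem_product, Finset.mem_range]
  constructor
  · rintro ⟨_, h⟩; exact h
  · intro h
    have h1 : i < n := by
      by_contra hi
      rw [chain_rows_n c n i (by omega)] at h
      omega
    have h2 := chain_entry_le c n i
    exact ⟨⟨h1, by omega⟩, h⟩

theorem diagOfC_card : (diagOfC c).card = n * m := by
  have e2 : siz n (c.1 n) = ∑ i ∈ Finset.range n, c.1 n i + c.1 n n := Finset.sum_range_succ _ _
  have e3 := chain_rows_n c n n le_rfl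
  have e4 := chain_siz c n le_rfl
  calc ((Finset.range n ×ˢ Finset.range (n * m + 1)).filter fun p => p.2 < c.1 n p.1).card
      = ∑ i ∈ Finset.range n, ((Finset.range (n*m+1)).filter fun j => j < c.1 n i).card :=
        prod_filter_card n (n*m+1) (fun a b => b < c.1 n a)
    _ = ∑ i ∈ Finset.range n, c.1 n i := Finset.sum_congr rfl (fun i _ =>
        filter_lt_card (by have := chain_entry_le c n i; omega))
    _ = n * m := by omega

/-- the tableau entry function of a chain -/
def entryOfC (i j : ℕ) : ℕ :=
  if j < c.1 n i then ((Finset.range n).filter fun k => c.1 (k+1) i ≤ j).card else 0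

theorem entryOfC_char {i j : ℕ} (hij : j < c.1 n i) :
    ∀ k, k < n → (c.1 (k+1) i ≤ j ↔ k < entryOfC c i j) := by
  intro k hk
  rw [entryOfC, if_pos hij]
  exact dc_filter (fun k h => le_trans (chain_mono c (k+1) (k+2) (by omega) i) h) n k hk

theorem entryOfC_lt_n {i j : ℕ} (hij : j < c.1 n i) : entryOfC c i j < n := by
  have hn : 0 < n := by
    by_contra hn
    have h1 := chain_entry_le c n i
    have h2 : n * m = 0 := by rw [show n = 0 by omega]; ring
    omega
  have hc := entryOfC_char c hij (n-1) (by omega)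
  have hle : entryOfC c i j ≤ n := by
    rw [entryOfC, if_pos hij]
    exact lt_filter_card_le n
  rw [show n - 1 + 1 = n by omega] at hc
  omega

/-- the key window characterization: entry `< t` iff the cell lies in `c t` -/
theorem entryOfC_window {i j t : ℕ} (hij : j < c.1 n i) (ht : t ≤ n) :
    (entryOfC c i j < t ↔ j < c.1 t i) := by
  cases t with
  | zero =>
    rw [c.2.1]
    simp
  | succ t =>
    have hc := entryOfC_char c hij t (by omega)
    omega

/-- the semistandard Young tableau associated to a chain -/
def ssytOfC : SemistandardYoungTableau (diagOfC c) where
  entry := entryOfC c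
  row_weak' := by
    intro i j1 j2 hj hcell
    rw [mem_diagOfC] at hcell
    have h1 : j1 < c.1 n i := by omega
    rw [entryOfC, entryOfC, if_pos hcell, if_pos h1]
    apply Finset.card_le_card
    intro x hx
    rw [Finset.mem_filter] at hx ⊢
    exact ⟨hx.1, le_trans hx.2 (by omega)⟩
  col_strict' := by
    have step : ∀ i j, (i+1, j) ∈ diagOfC c → entryOfC c i j < entryOfC c (i+1) j := by
      intro i j hcell
      rw [mem_diagOfC] at hcell
      set t := entryOfC c (i+1) j with ht
      have htn : t < n := entryOfC_lt_n c hcell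
      have h1 : ¬ (c.1 (t+1) (i+1) ≤ j) := by
        rw [entryOfC_char c hcell t htn]
        omega
      have h2 : c.1 (t+1) (i+1) ≤ c.1 t i := (c.2.2.1 t).2 i
      have h3 : j < c.1 t i := by omega
      have h4 : j < c.1 n i := by
        have := chain_mono c t n (by omega) i
        omega
      rw [← entryOfC_window c h4 (by omega)] at h3
      omega
    intro i1 i2 j hi hcell
    have gen : ∀ d i, (i + d + 1, j) ∈ diagOfC c →
        entryOfC c i j < entryOfC c (i + d + 1) j := by
      intro d
      induction d with
      | zero => intro i h; exact step i j h
      | succ d ih =>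
        intro i h
        have hprev : (i + d + 1, j) ∈ diagOfC c := by
          apply (diagOfC c).up_left_mem (by omega) le_rfl h
        calc entryOfC c i j < entryOfC c (i + d + 1) j := ih i hprev
          _ < entryOfC c (i + d + 1 + 1) j := step (i + d + 1) j (by
              rw [show i + d + 1 + 1 = i + (d+1) + 1 by omega]; exact h)
          _ = entryOfC c (i + (d+1) + 1) j := by rw [show i + d + 1 + 1 = i + (d+1) + 1 by omega]
    have := gen (i2 - i1 - 1) i1 (by rw [show i1 + (i2 - i1 - 1) + 1 = i2 by omega]; exact hcell)
    rwa [show i1 + (i2 - i1 - 1) + 1 = i2 by omega] at this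
  zeros' := by
    intro i j hcell
    rw [mem_diagOfC] at hcell
    rw [entryOfC, if_neg hcell]

theorem ssytOfC_content (k : ℕ) :
    ((diagOfC c).cells.filter fun p => ssytOfC c p.1 p.2 = k).card = if k < n then m else 0 := by
  have hentry : ∀ p, p ∈ (diagOfC c).cells → ssytOfC c p.1 p.2 = entryOfC c p.1 p.2 := fun _ _ => rfl
  split_ifs with hk
  · -- k < n
    have cells_eq : (diagOfC c).cells.filter (fun p => ssytOfC c p.1 p.2 = k)
        = (Finset.range n ×ˢ Finset.range (n*m+1)).filter
            fun p => c.1 k p.1 ≤ p.2 ∧ p.2 < c.1 (k+1) p.1 := by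
      rw [show (diagOfC c).cells
          = (Finset.range n ×ˢ Finset.range (n * m + 1)).filter (fun p => p.2 < c.1 n p.1) from rfl,
        Finset.filter_filter]
      apply Finset.filter_congr
      rintro ⟨i, j⟩ hp
      simp only [Finset.mem_product, Finset.mem_range] at hp
      show (j < c.1 n i ∧ ssytOfC c i j = k) ↔ (c.1 k i ≤ j ∧ j < c.1 (k+1) i)
      constructor
      · rintro ⟨hij, he⟩
        have hw1 := entryOfC_window c hij (show k ≤ n by omega)
        have hw2 := entryOfC_window c hij (show k + 1 ≤ n by omega)
        have : ssytOfC c i j = entryOfC c i j := rfl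
        omega
      · rintro ⟨h1, h2⟩
        have hij : j < c.1 n i := by
          have := chain_mono c (k+1) n (by omega) i
          omega
        have hw1 := entryOfC_window c hij (show k ≤ n by omega)
        have hw2 := entryOfC_window c hij (show k + 1 ≤ n by omega)
        have : ssytOfC c i j = entryOfC c i j := rfl
        omega
    have e1 : ∀ i ∈ Finset.range n,
        ((Finset.range (n*m+1)).filter fun j => c.1 k i ≤ j ∧ j < c.1 (k+1) i).card
          = c.1 (k+1) i - c.1 k i := by
      intro i _
      have hb : c.1 (k+1) i ≤ n*m+1 := by have := chain_entry_le c (k+1) i; omega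
      have : (Finset.range (n*m+1)).filter (fun j => c.1 k i ≤ j ∧ j < c.1 (k+1) i)
          = Finset.Ico (c.1 k i) (c.1 (k+1) i) := by
        ext x
        simp only [Finset.mem_filter, Finset.mem_range, Finset.mem_Ico]
        omega
      rw [this, Nat.card_Ico]
    have e2 : ∑ i ∈ Finset.range n, (c.1 (k+1) i - c.1 k i) + ∑ i ∈ Finset.range n, c.1 k i
        = ∑ i ∈ Finset.range n, c.1 (k+1) i := by
      rw [← Finset.sum_add_distrib]
      apply Finset.sum_congr rfl
      intro i _
      have := chain_mono c k (k+1) (by omega) i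
      omega
    have e3 : siz n (c.1 k) = ∑ i ∈ Finset.range n, c.1 k i + c.1 k n := Finset.sum_range_succ _ _
    have e4 : siz n (c.1 (k+1)) = ∑ i ∈ Finset.range n, c.1 (k+1) i + c.1 (k+1) n :=
      Finset.sum_range_succ _ _
    have e5 := chain_rows_n c k n le_rfl
    have e6 := chain_rows_n c (k+1) n le_rfl
    have e7 := c.2.2.2.2 k hk
    calc ((diagOfC c).cells.filter fun p => ssytOfC c p.1 p.2 = k).card
        = ((Finset.range n ×ˢ Finset.range (n*m+1)).filter
            fun p => c.1 k p.1 ≤ p.2 ∧ p.2 < c.1 (k+1) p.1).card := by rw [cells_eq]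
      _ = ∑ i ∈ Finset.range n,
            ((Finset.range (n*m+1)).filter fun j => c.1 k i ≤ j ∧ j < c.1 (k+1) i).card :=
          prod_filter_card n (n*m+1) (fun a b => c.1 k a ≤ b ∧ b < c.1 (k+1) a)
      _ = ∑ i ∈ Finset.range n, (c.1 (k+1) i - c.1 k i) := Finset.sum_congr rfl e1
      _ = m := by omega
  · -- k ≥ n : no entries
    rw [Finset.card_eq_zero, Finset.filter_eq_empty_iff]
    rintro ⟨i, j⟩ hp
    replace hp := (mem_diagOfC c).mp hp
    have := entryOfC_lt_n c hp
    show ¬ ssytOfC c i j = k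
    have : ssytOfC c i j = entryOfC c i j := rfl
    omega

end ChainFacts
/-! ### From tableaux to chains -/

section TabFacts

variable {n m : ℕ} {ν : YoungDiagram}
  (T : SemistandardYoungTableau ν)
  (hT : ∀ k : ℕ, (ν.cells.filter fun p => T p.1 p.2 = k).card = if k < n then m else 0)

include hT

theorem tab_entry_lt {i j : ℕ} (h : (i, j) ∈ ν) : T i j < n := by
  by_contra hk
  have h0 := hT (T i j)
  rw [if_neg (by omega)] at h0
  rw [Finset.card_eq_zero, Finset.filter_eq_empty_iff] at h0
  exact h0 (ν.mem_cells (i, j) |>.mpr h) rfl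

theorem tab_le_entry : ∀ i j, (i, j) ∈ ν → i ≤ T i j := by
  intro i
  induction i with
  | zero => intro j _; omega
  | succ i ih =>
    intro j h
    have h1 : (i, j) ∈ ν := ν.up_left_mem (by omega) le_rfl h
    have h2 := T.col_strict (show i < i + 1 by omega) h
    have := ih j h1
    omega

theorem tab_row_lt {i j : ℕ} (h : (i, j) ∈ ν) : i < n := by
  have := tab_le_entry T hT i j h
  have := tab_entry_lt T hT h
  omega

omit hT

theorem tab_col_lt (hν : ν.card = n * m) {i j : ℕ} (h : (i, j) ∈ ν) : j < n * m := by
  have hsub : (Finset.range (j+1)).image (fun q => (i, q)) ⊆ ν.cells := by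
    intro p hp
    rw [Finset.mem_image] at hp
    obtain ⟨q, hq, rfl⟩ := hp
    rw [Finset.mem_range] at hq
    exact (ν.mem_cells _).mpr (ν.up_left_mem le_rfl (by omega) h)
  have hcard := Finset.card_le_card hsub
  rw [Finset.card_image_of_injective _ (fun a b hab => by simpa using hab),
    Finset.card_range] at hcard
  rw [show ν.cells.card = ν.card from rfl, hν] at hcard
  omega

/-- the chain of shapes of a tableau: row `i` of the `t`-th shape -/
def chainOfTabFun (i : ℕ) (t : ℕ) : ℕ :=
  ((Finset.range (n*m+1)).filter fun j => (i, j) ∈ ν ∧ T i j < min t n).card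

theorem chainOfTab_char {t i j : ℕ} (hj : j < n*m+1) :
    (j < chainOfTabFun (n := n) (m := m) T i t ↔ ((i, j) ∈ ν ∧ T i j < min t n)) := by
  have hdc : ∀ k, ((i, k+1) ∈ ν ∧ T i (k+1) < min t n) → ((i, k) ∈ ν ∧ T i k < min t n) := by
    rintro k ⟨hk, hTk⟩
    have h1 : (i, k) ∈ ν := ν.up_left_mem le_rfl (by omega) hk
    have h2 := T.row_weak (show k < k + 1 by omega) hk
    exact ⟨h1, by omega⟩
  exact (dc_filter hdc (n*m+1) j hj).symm

theorem chainOfTabFun_le (t i : ℕ) : chainOfTabFun (n := n) (m := m) T i t ≤ n*m+1 :=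
  lt_filter_card_le _

end TabFacts
/-! ### The chain of a tableau is a chain; the second equivalence -/

theorem leOfForallLtNat {a b : ℕ} (h : ∀ j, j < a → j < b) : a ≤ b := by
  by_contra hc
  exact absurd (h b (by omega)) (by omega)

/-- the target type of the theorem -/
def TargetT (n m : ℕ) : Type :=
  (ν : {ν : YoungDiagram // ν.card = n * m}) ×
    {T : SemistandardYoungTableau ν.1 //
      ∀ k : ℕ, (ν.1.cells.filter fun c => T c.1 c.2 = k).card = if k < n then m else 0}

section TabToChain

variable {n m : ℕ} {ν : YoungDiagram} (hν : ν.card = n * m)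
  (T : SemistandardYoungTableau ν)
  (hT : ∀ k : ℕ, (ν.cells.filter fun p => T p.1 p.2 = k).card = if k < n then m else 0)

include hν hT

theorem tab_cells_eq :
    ν.cells = (Finset.range n ×ˢ Finset.range (n*m+1)).filter fun p => p ∈ ν := by
  ext ⟨i, j⟩
  simp only [Finset.mem_filter, Finset.mem_product, Finset.mem_range, YoungDiagram.mem_cells]
  constructor
  · intro h
    exact ⟨⟨tab_row_lt T hT h, by have := tab_col_lt hν h; omega⟩, h⟩
  · rintro ⟨_, h⟩
    exact h

theorem tab_sum_eq {t : ℕ} (ht : t ≤ n) :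
    ∑ i ∈ Finset.range n, chainOfTabFun (n := n) (m := m) T i t
      = (ν.cells.filter fun p => T p.1 p.2 < t).card := by
  have htmin : min t n = t := by omega
  calc ∑ i ∈ Finset.range n, chainOfTabFun (n := n) (m := m) T i t
      = ((Finset.range n ×ˢ Finset.range (n*m+1)).filter
          fun p => (p.1, p.2) ∈ ν ∧ T p.1 p.2 < min t n).card :=
        (prod_filter_card n (n*m+1) (fun a b => (a, b) ∈ ν ∧ T a b < min t n)).symm
    _ = (ν.cells.filter fun p => T p.1 p.2 < t).card := by
        rw [tab_cells_eq hν T hT, Finset.filter_filter]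
        congr 1
        apply Finset.filter_congr
        rintro ⟨i, j⟩ _
        rw [htmin]

theorem tab_count_lt {t : ℕ} (ht : t ≤ n) :
    (ν.cells.filter fun p => T p.1 p.2 < t).card = t * m := by
  induction t with
  | zero =>
    simp only [Nat.lt_irrefl, Nat.zero_mul]
    rw [Finset.card_eq_zero, Finset.filter_eq_empty_iff]
    intro p _
    omega
  | succ t ih =>
    have hsplit : ν.cells.filter (fun p => T p.1 p.2 < t+1)
        = (ν.cells.filter fun p => T p.1 p.2 < t) ∪ (ν.cells.filter fun p => T p.1 p.2 = t) := by
      ext p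
      simp only [Finset.mem_union, Finset.mem_filter]
      constructor
      · rintro ⟨h1, h2⟩
        rcases Nat.lt_or_ge (T p.1 p.2) t with h | h
        · exact Or.inl ⟨h1, h⟩
        · exact Or.inr ⟨h1, by omega⟩
      · rintro (⟨h1, h2⟩ | ⟨h1, h2⟩) <;> exact ⟨h1, by omega⟩
    have hdisj : Disjoint (ν.cells.filter fun p => T p.1 p.2 < t)
        (ν.cells.filter fun p => T p.1 p.2 = t) := by
      rw [Finset.disjoint_left]
      intro p h1 h2
      rw [Finset.mem_filter] at h1 h2
      omega
    rw [hsplit, Finset.card_union_of_disjoint hdisj, ih (by omega), hT t, if_pos (by omega)]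
    ring

theorem chainOfTabC_prop :
    (fun t i => chainOfTabFun (n := n) (m := m) T i t) 0 = (fun _ => 0)
    ∧ (∀ t, hsle ((fun t i => chainOfTabFun (n := n) (m := m) T i t) t)
        ((fun t i => chainOfTabFun (n := n) (m := m) T i t) (t+1)))
    ∧ (∀ t, n ≤ t → (fun t i => chainOfTabFun (n := n) (m := m) T i t) t
        = (fun t i => chainOfTabFun (n := n) (m := m) T i t) n)
    ∧ (∀ t, t < n → siz n ((fun t i => chainOfTabFun (n := n) (m := m) T i t) (t+1))
        = siz n ((fun t i => chainOfTabFun (n := n) (m := m) T i t) t) + m) := by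
  refine ⟨?_, ?_, ?_, ?_⟩
  · funext i
    show chainOfTabFun (n := n) (m := m) T i 0 = 0
    apply Finset.card_eq_zero.mpr
    rw [Finset.filter_eq_empty_iff]
    intro j _
    rintro ⟨_, h2⟩
    omega
  · intro t
    constructor
    · intro i
      show chainOfTabFun (n := n) (m := m) T i t ≤ chainOfTabFun (n := n) (m := m) T i (t+1)
      apply Finset.card_le_card
      intro x hx
      rw [Finset.mem_filter] at hx ⊢
      refine ⟨hx.1, hx.2.1, by have := hx.2.2; omega⟩
    · intro i
      show chainOfTabFun (n := n) (m := m) T (i+1) (t+1) ≤ chainOfTabFun (n := n) (m := m) T i t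
      apply leOfForallLtNat
      intro j hj
      have hjM : j < n*m+1 := by
        have := chainOfTabFun_le (n := n) (m := m) T (t+1) (i+1)
        omega
      rw [chainOfTab_char (n := n) (m := m) T hjM] at hj
      obtain ⟨hcell, hTj⟩ := hj
      have h1 : (i, j) ∈ ν := ν.up_left_mem (by omega) le_rfl hcell
      have h2 := T.col_strict (show i < i + 1 by omega) hcell
      rw [chainOfTab_char (n := n) (m := m) T hjM]
      exact ⟨h1, by omega⟩
  · intro t htn
    funext i
    show chainOfTabFun (n := n) (m := m) T i t = chainOfTabFun (n := n) (m := m) T i n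
    unfold chainOfTabFun
    rw [show min t n = n by omega, show min n n = n by omega]
  · intro t htn
    have h1 := tab_sum_eq hν T hT (show t ≤ n by omega)
    have h2 := tab_sum_eq hν T hT (show t + 1 ≤ n by omega)
    have h3 := tab_count_lt hν T hT (show t ≤ n by omega)
    have h4 := tab_count_lt hν T hT (show t + 1 ≤ n by omega)
    have hz : ∀ s, chainOfTabFun (n := n) (m := m) T n s = 0 := by
      intro s
      apply Finset.card_eq_zero.mpr
      rw [Finset.filter_eq_empty_iff]
      intro j _
      rintro ⟨hcell, _⟩
      have := tab_row_lt T hT hcell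
      omega
    have e1 : siz n (fun i => chainOfTabFun (n := n) (m := m) T i (t+1))
        = ∑ i ∈ Finset.range n, chainOfTabFun (n := n) (m := m) T i (t+1)
          + chainOfTabFun (n := n) (m := m) T n (t+1) := Finset.sum_range_succ _ _
    have e2 : siz n (fun i => chainOfTabFun (n := n) (m := m) T i t)
        = ∑ i ∈ Finset.range n, chainOfTabFun (n := n) (m := m) T i t
          + chainOfTabFun (n := n) (m := m) T n t := Finset.sum_range_succ _ _
    have e3 := hz t
    have e4 := hz (t+1)
    have e5 : (t+1) * m = t * m + m := by ring
    show siz n (fun i => chainOfTabFun (n := n) (m := m) T i (t+1))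
      = siz n (fun i => chainOfTabFun (n := n) (m := m) T i t) + m
    omega

/-- the chain associated to a tableau -/
def chainOfTabC : ChainT n m :=
  ⟨fun t i => chainOfTabFun (n := n) (m := m) T i t, chainOfTabC_prop hν T hT⟩

end TabToChain

section Equiv2

variable {n m : ℕ}

/-- chain to tableau -/
def tabOfChain (c : ChainT n m) : TargetT n m :=
  ⟨⟨diagOfC c, diagOfC_card c⟩, ⟨ssytOfC c, ssytOfC_content c⟩⟩

/-- tableau to chain -/
def chainOfTabX (X : TargetT n m) : ChainT n m :=
  chainOfTabC X.1.2 X.2.1 X.2.2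

theorem equiv2_left_inv (c : ChainT n m) : chainOfTabX (tabOfChain c) = c := by
  apply chain_ext
  intro t ht
  funext i
  show chainOfTabFun (n := n) (m := m) (ssytOfC c) i t = c.1 t i
  have hfe : (Finset.range (n*m+1)).filter
      (fun j => (i, j) ∈ diagOfC c ∧ ssytOfC c i j < min t n)
      = (Finset.range (n*m+1)).filter (fun j => j < c.1 t i) := by
    apply Finset.filter_congr
    intro j _
    have htmin : min t n = t := by omega
    rw [htmin]
    constructor
    · rintro ⟨hcell, hent⟩
      rw [mem_diagOfC] at hcell
      have hw := entryOfC_window c hcell ht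
      have hee : ssytOfC c i j = entryOfC c i j := rfl
      omega
    · intro hj
      have hcell : j < c.1 n i := by
        have := chain_mono c t n ht i
        omega
      have hw := entryOfC_window c hcell ht
      have hee : ssytOfC c i j = entryOfC c i j := rfl
      rw [mem_diagOfC]
      exact ⟨hcell, by omega⟩
  show ((Finset.range (n*m+1)).filter
      fun j => (i, j) ∈ diagOfC c ∧ ssytOfC c i j < min t n).card = c.1 t i
  rw [hfe]
  exact filter_lt_card (by have := chain_entry_le c t i; omega)

theorem equiv2_diag_eq (X : TargetT n m) : diagOfC (chainOfTabX X) = X.1.1 := by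
  obtain ⟨⟨ν, hν⟩, T, hT⟩ := X
  apply YoungDiagram.ext
  ext ⟨i, j⟩
  rw [show (diagOfC (chainOfTabX ⟨⟨ν, hν⟩, T, hT⟩)).cells
    = (diagOfC (chainOfTabX ⟨⟨ν, hν⟩, T, hT⟩)).cells from rfl]
  rw [YoungDiagram.mem_cells, YoungDiagram.mem_cells, mem_diagOfC]
  show j < chainOfTabFun (n := n) (m := m) T i n ↔ (i, j) ∈ ν
  by_cases hjM : j < n*m+1
  · rw [chainOfTab_char (n := n) (m := m) T hjM]
    constructor
    · rintro ⟨h, _⟩; exact h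
    · intro h
      exact ⟨h, by have := tab_entry_lt T hT h; omega⟩
  · constructor
    · intro h
      have := chainOfTabFun_le (n := n) (m := m) T n i
      omega
    · intro h
      have := tab_col_lt hν h
      omega

theorem equiv2_entry_eq (X : TargetT n m) :
    ∀ i j, entryOfC (chainOfTabX X) i j = X.2.1 i j := by
  obtain ⟨⟨ν, hν⟩, T, hT⟩ := X
  intro i j
  have hdiag : diagOfC (chainOfTabX ⟨⟨ν, hν⟩, T, hT⟩) = ν := equiv2_diag_eq _
  by_cases hcell : (i, j) ∈ ν
  · have hjM : j < n*m+1 := by have := tab_col_lt hν hcell; omega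
    have hlt : j < (chainOfTabX (⟨⟨ν, hν⟩, T, hT⟩ : TargetT n m)).1 n i := by
      rw [← mem_diagOfC, hdiag]
      exact hcell
    rw [entryOfC, if_pos hlt]
    have hfe : (Finset.range n).filter
        (fun k => (chainOfTabX (⟨⟨ν, hν⟩, T, hT⟩ : TargetT n m)).1 (k+1) i ≤ j)
        = (Finset.range n).filter (fun k => k < T i j) := by
      apply Finset.filter_congr
      intro k hk
      rw [Finset.mem_range] at hk
      have hchar := chainOfTab_char (n := n) (m := m) T (t := k+1) (i := i) hjM
      have hmin : min (k+1) n = k+1 := by omega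
      rw [hmin] at hchar
      simp only [eq_iff_iff]
      have hch : j < (chainOfTabX (⟨⟨ν, hν⟩, T, hT⟩ : TargetT n m)).1 (k+1) i
          ↔ ((i, j) ∈ ν ∧ T i j < k+1) := hchar
      constructor
      · intro hle
        have hn : ¬ (j < (chainOfTabX (⟨⟨ν, hν⟩, T, hT⟩ : TargetT n m)).1 (k+1) i) := by omega
        rw [hch] at hn
        simp only [hcell, true_and] at hn
        omega
      · intro hkT
        by_contra hle
        have hlt2 : j < (chainOfTabX (⟨⟨ν, hν⟩, T, hT⟩ : TargetT n m)).1 (k+1) i := by omega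
        rw [hch] at hlt2
        omega
    rw [hfe]
    have hTn := tab_entry_lt T hT hcell
    exact filter_lt_card (by omega)
  · have hlt : ¬ (j < (chainOfTabX (⟨⟨ν, hν⟩, T, hT⟩ : TargetT n m)).1 n i) := by
      intro h
      apply hcell
      have := (mem_diagOfC (chainOfTabX (⟨⟨ν, hν⟩, T, hT⟩ : TargetT n m)) (i := i) (j := j)).mpr h
      rwa [hdiag] at this
    rw [entryOfC, if_neg hlt, T.zeros hcell]

theorem TargetT.ext' {X Y : TargetT n m} (h1 : X.1.1 = Y.1.1)
    (h2 : ∀ i j, X.2.1 i j = Y.2.1 i j) : X = Y := by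
  obtain ⟨⟨ν1, hν1⟩, T1, hT1⟩ := X
  obtain ⟨⟨ν2, hν2⟩, T2, hT2⟩ := Y
  simp only at h1 h2
  subst h1
  exact Sigma.ext rfl (heq_of_eq (Subtype.ext (SemistandardYoungTableau.ext h2)))

theorem equiv2_right_inv (X : TargetT n m) : tabOfChain (chainOfTabX X) = X := by
  apply TargetT.ext'
  · exact equiv2_diag_eq X
  · exact equiv2_entry_eq X

/-- the second equivalence -/
def equiv2 (n m : ℕ) : ChainT n m ≃ TargetT n m where
  toFun := tabOfChain
  invFun := chainOfTabX
  left_inv := equiv2_left_inv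
  right_inv := equiv2_right_inv

end Equiv2
/-- the number of `n × n` symmetric non-negative integer matrices with all row
(and column) sums `m` equals the number of irreducible constituents, counted with
multiplicity, of the character of `S_{nm}` induced from the trivial character of the Young
subgroup `S_m^n`; by Young's rule, the latter equals `Σ_{ν ⊢ nm} K_{ν, m^n}`, the total
number of semistandard Young tableaux with `nm` cells and content `m^n` (entries
`0, 1, …, n−1`, each occurring `m` times). -/
theorem stmt19 (n m : ℕ) (hn : 0 < n) (hm : 0 < m) :
    Nat.card {A : Matrix (Fin n) (Fin n) ℕ //
        ((∀ i, ∑ j, A i j = m) ∧ (∀ j, ∑ i, A i j = m)) ∧ A = Aᵀ} =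
      Nat.card ((ν : {ν : YoungDiagram // ν.card = n * m}) ×
        {T : SemistandardYoungTableau ν.1 //
          ∀ k : ℕ, (ν.1.cells.filter fun c => T c.1 c.2 = k).card =
            if k < n then m else 0}) := by
  exact Nat.card_congr ((equiv1 n m).trans (equiv2 n m))
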